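/- arXiv:1311.2785 — 2 statements merged into one kernel-verified Lean document; each statement's English description precedes it below -/
import Mathlib

section
/- Suppose the multiset L of size v−1 admits a linear realization on {0,…,v−1} whose endpoints are 0 and 1 (a special linear realization of type 2). Then for every integer b ≥ 2, the multiset L ∪ {2^b} admits a linear realization on {0,…,v−1+b} whose endpoints are 0 and 1. -/
/-- Multiset of absolute differences of consecutive entries of a list. -/
def pathDiffs (l : List ℕ) : Multiset ℕ :=
  ↑(List.zipWith (fun x y => max x y - min x y) l l.tail)

/-- `l` is a linear realization of the multiset `L`: a permutation of
`{0, …, |L|}` whose multiset of consecutive absolute differences is `L`. -/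
def IsLinReal (L : Multiset ℕ) (l : List ℕ) : Prop :=
  l.Perm (List.range (Multiset.card L + 1)) ∧ pathDiffs l = L

/-- The cyclic edge-length `ℓ(x,y) = min(|x−y|, v−|x−y|)` in `K_v`. -/
def cycLen (v x y : ℕ) : ℕ := min (max x y - min x y) (v - (max x y - min x y))

def cycDiffs (v : ℕ) (l : List ℕ) : Multiset ℕ :=
  ↑(List.zipWith (cycLen v) l l.tail)

/-- `l` is a cyclic realization of `L`: a Hamiltonian path of `K_v` on
`{0, …, v−1}` (with `v = |L|+1`) whose multiset of cyclic edge-lengths is `L`. -/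
def IsCycReal (L : Multiset ℕ) (l : List ℕ) : Prop :=
  l.Perm (List.range (Multiset.card L + 1)) ∧
    cycDiffs (Multiset.card L + 1) l = L

/-- Vertices `a` and `b` are adjacent (consecutive, in either order) in the path `l`. -/
def AdjIn (a b : ℕ) (l : List ℕ) : Prop :=
  [a, b] <:+: l ∨ [b, a] <:+: l

/-- The endpoints of the path `l` are `0` and `1`. -/
def Ends01 (l : List ℕ) : Prop :=
  (l.head? = some 0 ∧ l.getLast? = some 1) ∨
    (l.head? = some 1 ∧ l.getLast? = some 0)

/-! ### Auxiliary lemmas -/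

def nd (x y : ℕ) : ℕ := max x y - min x y

lemma pathDiffs_cons_cons (x y : ℕ) (t : List ℕ) :
    pathDiffs (x :: y :: t) = nd x y ::ₘ pathDiffs (y :: t) := rfl

lemma pathDiffs_singleton (a : ℕ) : pathDiffs [a] = 0 := rfl

lemma pathDiffs_append (l1 l2 : List ℕ) (a : ℕ) :
    pathDiffs (l1 ++ a :: l2) = pathDiffs (l1 ++ [a]) + pathDiffs (a :: l2) := by
  induction l1 with
  | nil => simp [pathDiffs_singleton]
  | cons x l1 ih =>
    cases l1 with
    | nil =>
      show pathDiffs (x :: a :: l2) = pathDiffs [x, a] + pathDiffs (a :: l2)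
      rw [pathDiffs_cons_cons, show pathDiffs [x, a] = {nd x a} from rfl,
        Multiset.singleton_add]
    | cons y l1' =>
      simp only [List.cons_append] at ih ⊢
      rw [pathDiffs_cons_cons, pathDiffs_cons_cons, ih, Multiset.cons_add]

lemma pathDiffs_concat (l : List ℕ) (x a : ℕ) (h : l.getLast? = some x) :
    pathDiffs (l ++ [a]) = pathDiffs l + {nd x a} := by
  have hne : l ≠ [] := by rintro rfl; simp at h
  have hx : l.getLast hne = x := by
    rw [List.getLast?_eq_getLast hne] at h
    exact (Option.some_inj.1 h)
  have hl : l.dropLast ++ [x] = l := by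
    rw [← hx]; exact List.dropLast_append_getLast hne
  calc pathDiffs (l ++ [a]) = pathDiffs (l.dropLast ++ x :: [a]) := by rw [← hl]; simp
    _ = pathDiffs (l.dropLast ++ [x]) + pathDiffs [x, a] := pathDiffs_append _ _ _
    _ = pathDiffs l + {nd x a} := by
        rw [hl, pathDiffs_cons_cons, pathDiffs_singleton]; rfl

lemma pathDiffs_reverse (l : List ℕ) : pathDiffs l.reverse = pathDiffs l := by
  induction l with
  | nil => rfl
  | cons a t ih =>
    cases t with
    | nil => rfl
    | cons y t' =>
      have hlast : (y :: t').reverse.getLast? = some y := by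
        rw [List.getLast?_reverse]; rfl
      rw [List.reverse_cons, pathDiffs_concat _ y a hlast, ih, pathDiffs_cons_cons]
      have : nd y a = nd a y := by simp [nd, Nat.max_comm, Nat.min_comm]
      rw [this, add_comm, Multiset.singleton_add]

lemma pathDiffs_map_add (l : List ℕ) (b : ℕ) :
    pathDiffs (l.map (· + b)) = pathDiffs l := by
  unfold pathDiffs
  rw [← List.map_tail, List.zipWith_map]
  congr 1
  have : (fun x y : ℕ => max (x + b) (y + b) - min (x + b) (y + b))
      = fun x y : ℕ => max x y - min x y := by
    funext x y; omega
  rw [this]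

/-- `asc k = [k % 2, k % 2 + 2, …, k]`. -/
def asc : ℕ → List ℕ
  | 0 => [0]
  | 1 => [1]
  | (k+2) => asc k ++ [k+2]

lemma asc_ne_nil (k : ℕ) : asc k ≠ [] := by
  induction k using asc.induct with
  | case1 => simp [asc]
  | case2 => simp [asc]
  | case3 k ih => simp [asc]

lemma asc_head? (k : ℕ) : (asc k).head? = some (k % 2) := by
  induction k using asc.induct with
  | case1 => rfl
  | case2 => rfl
  | case3 k ih =>
    rw [asc, List.head?_append_of_ne_nil _ (asc_ne_nil k), ih]
    have : (k + 2) % 2 = k % 2 := by omega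
    rw [this]

lemma asc_getLast? (k : ℕ) : (asc k).getLast? = some k := by
  induction k using asc.induct with
  | case1 => rfl
  | case2 => rfl
  | case3 k ih => rw [asc, List.getLast?_concat]

lemma asc_pathDiffs (k : ℕ) : pathDiffs (asc k) = Multiset.replicate (k / 2) 2 := by
  induction k using asc.induct with
  | case1 => rfl
  | case2 => rfl
  | case3 k ih =>
    rw [asc, pathDiffs_concat _ k (k + 2) (asc_getLast? k), ih]
    have h2 : nd k (k + 2) = 2 := by unfold nd; omega
    have hk : (k + 2) / 2 = k / 2 + 1 := by omega
    rw [h2, hk, Multiset.replicate_succ, add_comm, Multiset.singleton_add]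

lemma asc_multiset (k : ℕ) :
    (↑(asc k) : Multiset ℕ) + ↑(asc (k + 1)) = Multiset.range (k + 2) := by
  induction k with
  | zero => decide
  | succ k ih =>
    have h1 : asc (k + 1 + 1) = asc k ++ [k + 2] := rfl
    have h2 : (↑(asc k ++ [k + 2]) : Multiset ℕ) = {k + 2} + ↑(asc k) := by
      rw [← Multiset.coe_add]
      exact Multiset.coe_eq_coe.2 List.perm_append_comm
    rw [h1, h2, Multiset.range_succ, ← Multiset.singleton_add, ← ih]
    abel

/-- Key construction lemma. -/
lemma key (L : Multiset ℕ) (l : List ℕ) (h : IsLinReal L l)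
    (h0 t0 : ℕ) (hh : l.head? = some h0) (ht : l.getLast? = some t0)
    (hsum : h0 + t0 = 1) (b : ℕ) (hb : 2 ≤ b) :
    ∃ l' : List ℕ, IsLinReal (L + Multiset.replicate b 2) l' ∧ Ends01 l' := by
  obtain ⟨hperm, hdiff⟩ := h
  set v := Multiset.card L + 1 with hv
  set Pb := l.map (· + b) with hPb
  have hPbh : Pb.head? = some (h0 + b) := by rw [hPb, List.head?_map, hh]; rfl
  have hPbt : Pb.getLast? = some (t0 + b) := by rw [hPb, List.getLast?_map, ht]; rfl
  set k1 := h0 + b - 2 with hk1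
  set k2 := t0 + b - 2 with hk2
  have hk1e : k1 + 2 = h0 + b := by omega
  have hk2e : k2 + 2 = t0 + b := by omega
  set rev := (asc k2).reverse with hrev
  -- decompositions
  obtain ⟨Q, hQ⟩ : ∃ Q, Pb = (h0 + b) :: Q :=
    ⟨Pb.tail, List.eq_cons_of_mem_head? (Option.mem_def.2 hPbh)⟩
  have hrevh : rev.head? = some k2 := by
    rw [hrev, List.head?_reverse, asc_getLast?]
  obtain ⟨R, hR⟩ : ∃ R, rev = k2 :: R :=
    ⟨rev.tail, List.eq_cons_of_mem_head? (Option.mem_def.2 hrevh)⟩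
  refine ⟨asc k1 ++ Pb ++ rev, ⟨?_, ?_⟩, ?_⟩
  · -- permutation
    rw [← Multiset.coe_eq_coe]
    have hcard : Multiset.card (L + Multiset.replicate b 2) + 1 = b + v := by
      rw [Multiset.card_add, Multiset.card_replicate]; omega
    rw [hcard]
    have hP : (↑Pb : Multiset ℕ) = Multiset.map (· + b) ↑(List.range v) := by
      rw [hPb, ← Multiset.map_coe]
      congr 1
      exact Multiset.coe_eq_coe.2 hperm
    have hascs : (↑(asc k1) : Multiset ℕ) + ↑(asc k2) = Multiset.range b := by
      rcases (by omega : (h0 = 0 ∧ t0 = 1) ∨ (h0 = 1 ∧ t0 = 0)) with ⟨e1, e2⟩ | ⟨e1, e2⟩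
      · have : k1 = b - 2 ∧ k2 = b - 1 := by omega
        rw [this.1, this.2]
        have := asc_multiset (b - 2)
        have e : b - 2 + 1 = b - 1 := by omega
        have e2 : b - 2 + 2 = b := by omega
        rw [e, e2] at this
        exact this
      · have : k2 = b - 2 ∧ k1 = b - 1 := by omega
        rw [this.1, this.2, add_comm]
        have := asc_multiset (b - 2)
        have e : b - 2 + 1 = b - 1 := by omega
        have e2 : b - 2 + 2 = b := by omega
        rw [e, e2] at this
        exact this
    have hrange : (Multiset.range b) + Multiset.map (· + b) ↑(List.range v)
        = ↑(List.range (b + v)) := by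
      have h3 : List.range (b + v) = List.range b ++ (List.range v).map (· + b) := by
        rw [List.range_add]
        congr 1
        exact List.map_congr_left (fun x _ => Nat.add_comm b x)
      rw [h3, ← Multiset.coe_add, Multiset.map_coe]
      rfl
    calc (↑(asc k1 ++ Pb ++ rev) : Multiset ℕ)
        = ↑(asc k1) + ↑(asc k2) + ↑Pb := by
          rw [← Multiset.coe_add, ← Multiset.coe_add, hrev, Multiset.coe_reverse]; abel
      _ = Multiset.range b + Multiset.map (· + b) ↑(List.range v) := by rw [hascs, hP]
      _ = ↑(List.range (b + v)) := hrange
  · -- pathDiffs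
    have step1 : asc k1 ++ Pb ++ rev = asc k1 ++ (h0 + b) :: (Q ++ rev) := by
      rw [hQ]; simp
    rw [step1, pathDiffs_append]
    have step2 : asc k1 ++ [h0 + b] = asc (k1 + 2) := by rw [asc, hk1e]
    have step3 : (h0 + b) :: (Q ++ rev) = Pb ++ rev := by rw [hQ]; simp
    rw [step2, step3, hR, pathDiffs_append, ← hR]
    have step4 : pathDiffs (Pb ++ [k2]) = pathDiffs Pb + {nd (t0 + b) k2} :=
      pathDiffs_concat Pb (t0 + b) k2 hPbt
    have step5 : pathDiffs rev = pathDiffs (asc k2) := by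
      rw [hrev, pathDiffs_reverse]
    rw [step4, step5, asc_pathDiffs, asc_pathDiffs]
    have hPd : pathDiffs Pb = L := by rw [hPb, pathDiffs_map_add, hdiff]
    have hnd : nd (t0 + b) k2 = 2 := by
      rw [← hk2e]; unfold nd; omega
    rw [hPd, hnd]
    have hrep : Multiset.replicate ((k1 + 2) / 2) 2 + ({2} : Multiset ℕ)
        + Multiset.replicate (k2 / 2) 2 = Multiset.replicate b 2 := by
      have h1 : ({2} : Multiset ℕ) = Multiset.replicate 1 2 := rfl
      rw [h1, ← Multiset.replicate_add, ← Multiset.replicate_add]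
      congr 1
      omega
    calc Multiset.replicate ((k1 + 2) / 2) 2 + (L + {2}
          + Multiset.replicate (k2 / 2) 2)
        = L + (Multiset.replicate ((k1 + 2) / 2) 2 + ({2} : Multiset ℕ)
          + Multiset.replicate (k2 / 2) 2) := by abel
      _ = L + Multiset.replicate b 2 := by rw [hrep]
  · -- Ends01
    have hhead : (asc k1 ++ Pb ++ rev).head? = some (k1 % 2) := by
      rw [List.append_assoc, List.head?_append_of_ne_nil _ (asc_ne_nil k1), asc_head?]
    have hlastrev : rev.getLast? = some (k2 % 2) := by
      rw [hrev, List.getLast?_reverse, asc_head?]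
    have hlast : (asc k1 ++ Pb ++ rev).getLast? = some (k2 % 2) := by
      rw [hR] at hlastrev ⊢
      rw [List.getLast?_append_of_ne_nil _ (by simp : (k2 :: R : List ℕ) ≠ [])]
      exact hlastrev
    rcases (by omega : (k1 % 2 = 0 ∧ k2 % 2 = 1) ∨ (k1 % 2 = 1 ∧ k2 % 2 = 0)) with
      ⟨e1, e2⟩ | ⟨e1, e2⟩
    · exact Or.inl ⟨by rw [hhead, e1], by rw [hlast, e2]⟩
    · exact Or.inr ⟨by rw [hhead, e1], by rw [hlast, e2]⟩

theorem stmt2 (L : Multiset ℕ) (l : List ℕ) (h : IsLinReal L l)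
    (he : Ends01 l) :
    ∀ b : ℕ, 2 ≤ b → ∃ l' : List ℕ,
      IsLinReal (L + Multiset.replicate b 2) l' ∧ Ends01 l' := by
  intro b hb
  rcases he with ⟨hh, ht⟩ | ⟨hh, ht⟩
  · exact key L l h 0 1 hh ht rfl b hb
  · exact key L l h 1 0 hh ht rfl b hb
end

section
/- For every even integer t ≥ 6 with t ≡ 2 (mod 4), the sequence [0, t, t+1, 1, 2, …, t−3, t−1, t−2] is a linear realization of the multiset {1^{t−2}, 2, t^2} on {0,…,t+1} in which t+1 and t are adjacent (special of type 1). -/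
lemma pathDiffs_cons_cons_s15 (a x : ℕ) (l : List ℕ) :
    pathDiffs (a :: x :: l) = (max a x - min a x) ::ₘ pathDiffs (x :: l) := rfl

lemma run_eq (n a : ℕ) :
    (List.range (n+1)).map (fun i => i + a) = a :: (List.range n).map (fun i => i + (a+1)) := by
  rw [List.range_succ_eq_map, List.map_cons, List.map_map]
  simp only [Nat.zero_add]
  congr 1
  apply List.map_congr_left
  intro i _
  simp [Function.comp, Nat.succ_eq_add_one]
  omega

lemma pathDiffs_run (n : ℕ) : ∀ (a : ℕ) (l' : List ℕ),
    pathDiffs ((List.range (n+1)).map (fun i => i + a) ++ l') =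
      Multiset.replicate n 1 + pathDiffs ((n+a) :: l') := by
  induction n with
  | zero => intro a l'; simp [run_eq]
  | succ n ih =>
    intro a l'
    rw [run_eq, run_eq, List.cons_append, List.cons_append, pathDiffs_cons_cons_s15,
      ← List.cons_append, ← run_eq, ih (a+1) l']
    have h1 : max a (a+1) - min a (a+1) = 1 := by omega
    have h2 : n + (a+1) = n + 1 + a := by omega
    rw [h1, h2, Multiset.replicate_succ, Multiset.cons_add]

theorem stmt15 (t : ℕ) (h6 : 6 ≤ t) (hmod : t % 4 = 2) :
    ∃ l : List ℕ,
      l = [0, t, t+1] ++ (List.range (t-3)).map (fun i => i + 1) ++ [t-1, t-2] ∧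
      IsLinReal (Multiset.replicate (t-2) 1 + {2} + Multiset.replicate 2 t) l ∧
      AdjIn (t+1) t l := by
  obtain ⟨m, rfl⟩ : ∃ m, t = m + 6 := ⟨t - 6, by omega⟩
  have h3 : m + 6 - 3 = m + 3 := by omega
  have h1 : m + 6 - 1 = m + 5 := by omega
  have h2 : m + 6 - 2 = m + 4 := by omega
  rw [h3, h1, h2]
  set A : List ℕ := (List.range (m+3)).map (fun i => i + 1) with hA
  refine ⟨_, rfl, ⟨?_, ?_⟩, ?_⟩
  · -- permutation
    have hcard : Multiset.card (Multiset.replicate (m+4) 1 + {2}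
        + Multiset.replicate 2 (m+6)) + 1 = m + 8 := by
      simp
    rw [hcard, ← Multiset.coe_eq_coe]
    have hr : List.range (m+8) = (0 :: A) ++ [m+4, m+5, m+6, m+7] := by
      rw [show m+8 = (m+4)+4 by omega, List.range_add,
        show m+4 = (m+3)+1 by omega, List.range_succ_eq_map]
      simp [hA, List.range_succ, Nat.succ_eq_add_one]
    rw [hr]
    simp only [← Multiset.coe_add, List.append_assoc, List.cons_append, List.nil_append,
      ← Multiset.cons_coe]
    rw [show m+6+1 = m+7 by omega]
    simp only [← Multiset.cons_coe, Multiset.coe_nil]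
    simp only [← Multiset.singleton_add]
    abel
  · -- pathDiffs
    simp only [List.append_assoc, List.cons_append, List.nil_append]
    rw [pathDiffs_cons_cons_s15, pathDiffs_cons_cons_s15]
    rw [hA, show m+3 = (m+2)+1 by omega, run_eq (m+2) 1, List.cons_append,
      pathDiffs_cons_cons_s15, ← List.cons_append, ← run_eq, pathDiffs_run (m+2) 1,
      pathDiffs_cons_cons_s15, pathDiffs_cons_cons_s15]
    have e1 : max 0 (m+6) - min 0 (m+6) = m+6 := by omega
    have e2 : max (m+6) (m+6+1) - min (m+6) (m+6+1) = 1 := by omega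
    have e3 : max (m+6+1) 1 - min (m+6+1) 1 = m+6 := by omega
    have e4 : max (m+2+1) (m+5) - min (m+2+1) (m+5) = 2 := by omega
    have e5 : max (m+5) (m+4) - min (m+5) (m+4) = 1 := by omega
    rw [e1, e2, e3, e4, e5]
    have e6 : pathDiffs [m+4] = 0 := rfl
    rw [e6]
    have e8 : Multiset.replicate (m+4) 1 = Multiset.replicate (m+2) 1 + (1 ::ₘ 1 ::ₘ 0) := by
      rw [show m+4 = (m+2)+2 by omega, Multiset.replicate_add]; rfl
    have e7 : Multiset.replicate 2 (m+6) = (m+6) ::ₘ (m+6) ::ₘ 0 := rfl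
    rw [e7, e8]
    simp only [← Multiset.singleton_add]
    abel
  · exact Or.inr ⟨[0], A ++ [m+5, m+4], by simp⟩
end
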